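/- Let ε be an injective monoid endomorphism of C₊ with ε(0,1) = (0,n) for some n ≥ 1. Then there exists s ∈ {0,…,n-1} such that ε = λ_{n,s}. -/
import Mathlib


def bmul (x y : ℕ × ℕ) : ℕ × ℕ :=
  (x.1 + y.1 - min x.2 y.1, x.2 + y.2 - min x.2 y.1)

abbrev Cplus := {x : ℕ × ℕ // x.1 ≤ x.2}

instance : Mul Cplus :=
  ⟨fun x y => ⟨bmul x.1 y.1, by have hx := x.2; have hy := y.2; simp only [bmul]; omega⟩⟩

instance : One Cplus := ⟨⟨(0, 0), le_refl 0⟩⟩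

theorem Cplus.mul_def (x y : Cplus) : (x * y).1 = bmul x.1 y.1 := rfl

theorem Cplus.one_def : (1 : Cplus).1 = (0, 0) := rfl

instance : Monoid Cplus where
  mul_assoc x y z := Subtype.ext (by
    simp only [Cplus.mul_def, bmul, Prod.ext_iff]; omega)
  one_mul x := Subtype.ext (by
    have := x.2
    simp only [Cplus.mul_def, Cplus.one_def, bmul, Prod.ext_iff]; omega)
  mul_one x := Subtype.ext (by
    have := x.2
    simp only [Cplus.mul_def, Cplus.one_def, bmul, Prod.ext_iff]; omega)

def lam (k : ℕ) : Cplus → Cplus :=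
  fun x => ⟨(k * x.1.1, k * x.1.2), Nat.mul_le_mul_left k x.2⟩

def sig (l m : ℕ) : Cplus → Cplus := fun x =>
  if x.1.1 = x.1.2 then 1 else ⟨(l, l + m * (x.1.2 - x.1.1)), by omega⟩

def lamns (n s : ℕ) : Cplus → Cplus := fun x =>
  if x.1.1 = 0 then ⟨(0, n * x.1.2), Nat.zero_le _⟩
  else ⟨(n * x.1.1 - s, n * x.1.2 - s), by
    have := Nat.mul_le_mul_left n x.2; omega⟩

def vsig : Cplus → Cplus := fun x =>
  if x.1 = (0, 0) then 1 else ⟨(x.1.1 + 1, x.1.2 + 1), by have := x.2; omega⟩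

def bpow (x : ℕ × ℕ) : ℕ → ℕ × ℕ
  | 0 => (0, 0)
  | n + 1 => bmul (bpow x n) x


private def Ee (i : ℕ) : Cplus := ⟨(i, i), le_refl i⟩

private def ap (j : ℕ) : Cplus := ⟨(0, j), Nat.zero_le j⟩

private lemma Ee_mul_Ee {i k : ℕ} (h : i ≤ k) : Ee i * Ee k = Ee k :=
  Subtype.ext (by simp only [Cplus.mul_def, bmul, Ee, Prod.ext_iff]; omega)

private lemma ap_mul_ap (j k : ℕ) : ap j * ap k = ap (j + k) :=
  Subtype.ext (by simp only [Cplus.mul_def, bmul, ap, Prod.ext_iff]; omega)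

private lemma Ee_mul_ap (i k : ℕ) : Ee i * ap k = ⟨(i, i + k), by omega⟩ :=
  Subtype.ext (by simp only [Cplus.mul_def, bmul, Ee, ap, Prod.ext_iff]; omega)

private lemma ap_one_mul_Ee {i : ℕ} (h : 1 ≤ i) : ap 1 * Ee i = Ee (i - 1) * ap 1 :=
  Subtype.ext (by simp only [Cplus.mul_def, bmul, Ee, ap, Prod.ext_iff]; omega)


/-- An injective monoid endomorphism ε of C₊ with ε(a) = aⁿ equals λ_{n,s} for some
s ∈ {0,…,n-1}. -/
theorem injective_endo_eq_lamns (ε : Cplus → Cplus)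
    (hmul : ∀ x y : Cplus, ε (x * y) = ε x * ε y) (hone : ε 1 = 1)
    (hinj : Function.Injective ε) (n : ℕ) (hn : 1 ≤ n)
    (ha : ε ⟨(0, 1), Nat.zero_le 1⟩ = ⟨(0, n), Nat.zero_le n⟩) :
    ∃ s, s < n ∧ ε = lamns n s := by
  classical
  set f : ℕ → ℕ := fun i => (ε (Ee i)).1.1 with hf
  have ha' : ε (ap 1) = ap n := by
    have h : ap 1 = (⟨(0, 1), Nat.zero_le 1⟩ : Cplus) := rfl
    rw [h, ha]; exact Subtype.ext rfl
  -- ε sends idempotents to idempotents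
  have hidem : ∀ i, ε (Ee i) = Ee (f i) := by
    intro i
    have h1 : Ee i * Ee i = Ee i := Ee_mul_Ee (le_refl i)
    have h2 := hmul (Ee i) (Ee i)
    rw [h1] at h2
    have h3 := congrArg Subtype.val h2.symm
    rw [Cplus.mul_def] at h3
    have hle := (ε (Ee i)).2
    refine Subtype.ext ?_
    have h4 : (Ee (f i)).1 = ((ε (Ee i)).1.1, (ε (Ee i)).1.1) := rfl
    rw [h4]
    rw [Prod.ext_iff] at h3 ⊢
    simp only [bmul] at h3
    omega
  -- ε on powers of a
  have hap : ∀ j, ε (ap j) = ap (n * j) := by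
    intro j
    induction j with
    | zero =>
      have h : ap 0 = 1 := Subtype.ext rfl
      rw [h, hone]; exact Subtype.ext rfl
    | succ j ih =>
      have h1 : ap j * ap 1 = ap (j + 1) := ap_mul_ap j 1
      have h2 := hmul (ap j) (ap 1)
      rw [h1, ih, ha', ap_mul_ap] at h2
      rw [h2, Nat.mul_succ]
  -- ε on a general element
  have hgen : ∀ (i j : ℕ) (h : i ≤ j),
      ε ⟨(i, j), h⟩ = ⟨(f i, f i + n * (j - i)), Nat.le_add_right _ _⟩ := by
    intro i j h
    have hdec : (⟨(i, j), h⟩ : Cplus) = Ee i * ap (j - i) := by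
      rw [Ee_mul_ap]
      exact Subtype.ext (by simp only [Prod.mk.injEq, true_and]; omega)
    rw [hdec, hmul, hidem, hap, Ee_mul_ap]
  -- f is injective
  have hfinj : Function.Injective f := by
    intro i k h
    have h1 : ε (Ee i) = ε (Ee k) := by rw [hidem, hidem, h]
    have h2 := hinj h1
    simpa [Ee, Prod.ext_iff] using congrArg (fun x : Cplus => x.1.1) h2
  -- f is monotone
  have hfmono : ∀ ⦃i k : ℕ⦄, i ≤ k → f i ≤ f k := by
    intro i k hik
    have h1 := hmul (Ee i) (Ee k)
    rw [Ee_mul_Ee hik, hidem, hidem] at h1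
    have h2 := congrArg Subtype.val h1
    rw [Cplus.mul_def, Prod.ext_iff] at h2
    simp only [bmul, Ee] at h2
    omega
  have hfs : StrictMono f := by
    intro i k hik
    rcases lt_or_eq_of_le (hfmono hik.le) with h | h
    · exact h
    · exact absurd (hfinj h) (Nat.ne_of_lt hik)
  have hf0 : f 0 = 0 := by
    have h : Ee 0 = 1 := Subtype.ext rfl
    simp only [hf, h, hone, Cplus.one_def]
  have hfge : ∀ i, i ≤ f i := fun i => hfs.le_apply
  -- the recurrence
  have hrec : ∀ i, 1 ≤ i → f i - min n (f i) = f (i - 1) := by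
    intro i hi
    have h1 := hmul (ap 1) (Ee i)
    rw [ap_one_mul_Ee hi, hmul, ha', hidem, hidem] at h1
    have h2 := congrArg Subtype.val h1
    rw [Cplus.mul_def, Cplus.mul_def, Prod.ext_iff] at h2
    simp only [bmul, Ee, ap] at h2
    omega
  -- f 1 ≤ n and 1 ≤ f 1
  have hf1 : 1 ≤ f 1 ∧ f 1 ≤ n := by
    have h1 := hrec 1 (le_refl 1)
    simp only [Nat.sub_self, hf0] at h1
    have h2 := hfge 1
    omega
  refine ⟨n - f 1, by omega, ?_⟩
  -- f i = n * i - (n - f 1) for i ≥ 1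
  have hfi : ∀ i, 1 ≤ i → f i = n * i - (n - f 1) := by
    intro i hi
    induction i with
    | zero => omega
    | succ i ih =>
      rcases Nat.eq_or_lt_of_le hi with h | h
      · simp only [← h]; omega
      · have hi1 : 1 ≤ i := by omega
        have h1 := hrec (i + 1) (by omega)
        simp only [Nat.add_sub_cancel] at h1
        have h2 : 1 ≤ f i := le_trans hi1 (hfge i)
        have h3 : f (i + 1) = f i + n := by omega
        have h5 : n ≤ n * i := Nat.le_mul_of_pos_right n (by omega)
        have h6 : n * (i + 1) = n * i + n := by ring
        rw [h3, ih hi1]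
        omega
  -- conclude
  funext x
  obtain ⟨⟨i, j⟩, hij⟩ := x
  have hij' : i ≤ j := hij
  rw [hgen i j hij']
  rcases Nat.eq_zero_or_pos i with hi | hi
  · subst hi
    have hl : lamns n (n - f 1) ⟨(0, j), hij⟩ = ⟨(0, n * j), Nat.zero_le _⟩ := by
      simp [lamns]
    rw [hl]
    refine Subtype.ext ?_
    simp only [Prod.mk.injEq, hf0, Nat.sub_zero, Nat.zero_add]
  · have hne : i ≠ 0 := by omega
    have hl : lamns n (n - f 1) ⟨(i, j), hij⟩ =
        ⟨(n * i - (n - f 1), n * j - (n - f 1)), by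
          have := Nat.mul_le_mul_left n hij'; omega⟩ := by
      simp [lamns, hne]
    rw [hl]
    refine Subtype.ext ?_
    have h1 := hfi i hi
    have h2 : n * (j - i) = n * j - n * i := Nat.mul_sub ..
    have h3 : n ≤ n * i := Nat.le_mul_of_pos_right n (by omega)
    have h4 : n * i ≤ n * j := Nat.mul_le_mul_left n hij'
    simp only [Prod.mk.injEq]
    constructor
    · omega
    · rw [h2, h1]; omega
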